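/- Let α₁, …, α_k be reals with √αₜ ∈ [(1+ε)^{1/2}, d^{1/3}] for all t, and Σₜ √αₜ ≥ s. Then ∏ₜ αₜ ≥ min{ (1+ε)^{s/(1+ε)^{1/2}}, d^{(2/3)·s/d^{1/3}} }. -/

import Mathlib

open Real

lemma log_div_self_monotoneOn' :
    MonotoneOn (fun x : ℝ => Real.log x / x) (Set.Icc 1 (Real.exp 1)) := by
  have hderiv : ∀ x ∈ Set.Ioo (1:ℝ) (Real.exp 1),
      HasDerivAt (fun x : ℝ => Real.log x / x) ((1 - Real.log x) / x ^ 2) x := by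
    intro x hx
    have hx0 : x ≠ 0 := by have := hx.1; positivity
    have := (Real.hasDerivAt_log hx0).div (hasDerivAt_id x) hx0
    refine this.congr_deriv ?_
    simp only [id_eq, inv_mul_cancel₀ hx0, mul_one]
  apply monotoneOn_of_deriv_nonneg (convex_Icc _ _)
  · apply ContinuousOn.div
    · exact Real.continuousOn_log.mono (by intro x hx; have := hx.1; simp; positivity)
    · exact continuousOn_id
    · intro x hx; have := hx.1; positivity
  · intro x hx
    rw [interior_Icc] at hx
    exact (hderiv x hx).differentiableAt.differentiableWithinAt
  · intro x hx
    rw [interior_Icc] at hx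
    rw [(hderiv x hx).deriv]
    have hx1 : (1:ℝ) < x := hx.1
    have hlog : Real.log x ≤ 1 := by
      rw [← Real.log_exp 1]
      exact Real.log_le_log (by linarith) hx.2.le
    have : (0:ℝ) < x ^ 2 := by positivity
    apply div_nonneg (by linarith) this.le

lemma min_log_div_self_le {L U b : ℝ} (hL : 1 ≤ L) (hbL : L ≤ b) (hbU : b ≤ U) :
    min (Real.log L / L) (Real.log U / U) ≤ Real.log b / b := by
  rcases le_total b (Real.exp 1) with hb | hb
  · refine (min_le_left _ _).trans ?_
    exact log_div_self_monotoneOn' ⟨hL, hbL.trans hb⟩ ⟨hL.trans hbL, hb⟩ hbL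
  · refine (min_le_right _ _).trans ?_
    exact Real.log_div_self_antitoneOn (by simpa using hb) (by simp; exact hb.trans hbU) hbU

/-- Product lower bound (Lemma A.1 of Ene–Vladu): if `√αₜ ∈ [(1+ε)^{1/2}, d^{1/3}]`
for all `t` and `∑ₜ √αₜ ≥ s`, then
`∏ₜ αₜ ≥ min{(1+ε)^{s/(1+ε)^{1/2}}, d^{(2/3)s/d^{1/3}}}`. -/
theorem product_lower_bound (k d : ℕ) (ε s : ℝ) (hε : 0 < ε) (α : Fin k → ℝ)
    (hl : ∀ t, Real.sqrt (1 + ε) ≤ Real.sqrt (α t))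
    (hu : ∀ t, Real.sqrt (α t) ≤ (d : ℝ) ^ ((1 : ℝ) / 3))
    (hs : s ≤ ∑ t, Real.sqrt (α t)) :
    min ((1 + ε) ^ (s / Real.sqrt (1 + ε)))
        ((d : ℝ) ^ ((2 / 3) * s / (d : ℝ) ^ ((1 : ℝ) / 3))) ≤ ∏ t, α t := by
  set L := Real.sqrt (1 + ε) with hLdef
  set U := (d : ℝ) ^ ((1 : ℝ) / 3) with hUdef
  have hε1 : (1:ℝ) < 1 + ε := by linarith
  have hL1 : (1:ℝ) < L := by
    rw [hLdef]
    exact Real.lt_sqrt_of_sq_lt (by nlinarith)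
  have hL0 : (0:ℝ) < L := by linarith
  have hLsq : L ^ 2 = 1 + ε := Real.sq_sqrt (by linarith)
  -- each α t is at least 1 + ε
  have hα : ∀ t, 1 + ε ≤ α t := by
    intro t
    have h1 : (0:ℝ) < Real.sqrt (α t) := lt_of_lt_of_le hL0 (hl t)
    have h2 : 0 < α t := Real.sqrt_pos.mp h1
    calc 1 + ε = L ^ 2 := hLsq.symm
      _ ≤ Real.sqrt (α t) ^ 2 := by gcongr; exact hl t
      _ = α t := Real.sq_sqrt h2.le
  have hprod1 : (1:ℝ) ≤ ∏ t, α t := by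
    have : ∏ _t : Fin k, (1:ℝ) ≤ ∏ t, α t :=
      Finset.prod_le_prod (fun t _ => by norm_num) (fun t _ => by linarith [hα t])
    simpa using this
  rcases le_or_gt s 0 with hs0 | hs0
  · -- trivial case: s ≤ 0
    refine (min_le_left _ _).trans ?_
    refine le_trans ?_ hprod1
    exact Real.rpow_le_one_of_one_le_of_nonpos hε1.le
      (div_nonpos_of_nonpos_of_nonneg hs0 hL0.le)
  · -- main case: s > 0, hence k ≥ 1
    have hk : Nonempty (Fin k) := by
      rcases Nat.eq_zero_or_pos k with rfl | hk
      · simp at hs; linarith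
      · exact ⟨⟨0, hk⟩⟩
    obtain ⟨t0⟩ := hk
    have hLU : L ≤ U := (hl t0).trans (hu t0)
    have hU1 : (1:ℝ) < U := lt_of_lt_of_le hL1 hLU
    have hd1 : (1:ℝ) < (d:ℝ) := by
      by_contra h
      push_neg at h
      have : U ≤ 1 := by
        rw [hUdef]
        calc (d:ℝ) ^ ((1:ℝ)/3) ≤ 1 ^ ((1:ℝ)/3) :=
          Real.rpow_le_rpow (Nat.cast_nonneg d) h (by norm_num)
        _ = 1 := Real.one_rpow _
      linarith
    have hd0 : (0:ℝ) < (d:ℝ) := by linarith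
    have hlogU : Real.log U = (1/3) * Real.log d := by
      rw [hUdef, Real.log_rpow hd0]
    have hlogL : Real.log (1 + ε) = 2 * Real.log L := by
      rw [← hLsq, Real.log_pow]; push_cast; ring
    set a := (1 + ε) ^ ((1:ℝ) / L) with hadef
    set b := (d:ℝ) ^ (((2:ℝ)/3) / U) with hbdef
    have ha0 : 0 < a := Real.rpow_pos_of_pos (by linarith) _
    have hb0 : 0 < b := Real.rpow_pos_of_pos hd0 _
    have ha1 : 1 ≤ a := Real.one_le_rpow hε1.le (by positivity)
    have hb1 : 1 ≤ b := Real.one_le_rpow hd1.le (by positivity)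
    set c := min a b with hcdef
    have hc0 : 0 < c := lt_min ha0 hb0
    have hc1 : 1 ≤ c := le_min ha1 hb1
    have hlogc : Real.log c = 2 * min (Real.log L / L) (Real.log U / U) := by
      have hla : Real.log a = 2 * (Real.log L / L) := by
        rw [hadef, Real.log_rpow (by linarith), hlogL]; ring
      have hlb : Real.log b = 2 * (Real.log U / U) := by
        rw [hbdef, Real.log_rpow hd0, hlogU]; ring
      rcases le_total a b with hab | hab
      · rw [hcdef, min_eq_left hab, hla, min_eq_left]
        have := Real.log_le_log ha0 hab
        linarith [hla, hlb]
      · rw [hcdef, min_eq_right hab, hlb, min_eq_right]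
        have := Real.log_le_log hb0 hab
        linarith [hla, hlb]
    -- pointwise bound: c ^ √(α t) ≤ α t
    have hpt : ∀ t, c ^ Real.sqrt (α t) ≤ α t := by
      intro t
      set β := Real.sqrt (α t) with hβdef
      have hβL : L ≤ β := hl t
      have hβU : β ≤ U := hu t
      have hβ0 : 0 < β := lt_of_lt_of_le hL0 hβL
      have hαt : α t = β ^ 2 := (Real.sq_sqrt (Real.sqrt_pos.mp (lt_of_lt_of_le hL0 (hl t))).le).symm
      rw [hαt]
      have key : min (Real.log L / L) (Real.log U / U) ≤ Real.log β / β :=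
        min_log_div_self_le hL1.le hβL hβU
      have hkey2 : min (Real.log L / L) (Real.log U / U) * β ≤ Real.log β :=
        (le_div_iff₀ hβ0).mp key
      have h1 : Real.log (c ^ β) ≤ Real.log (β ^ 2) := by
        rw [Real.log_rpow hc0, Real.log_pow, hlogc]
        push_cast
        nlinarith [hkey2]
      have := Real.exp_le_exp.mpr h1
      rwa [Real.exp_log (Real.rpow_pos_of_pos hc0 _), Real.exp_log (by positivity)] at this
    -- combine
    have hprod : c ^ s ≤ ∏ t, α t := by
      calc c ^ s ≤ c ^ (∑ t, Real.sqrt (α t)) :=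
              Real.rpow_le_rpow_of_exponent_le hc1 hs
        _ = ∏ t, c ^ Real.sqrt (α t) := Real.rpow_sum_of_pos hc0 _ _
        _ ≤ ∏ t, α t := by
              apply Finset.prod_le_prod
              · intro t _; positivity
              · intro t _; exact hpt t
    refine le_trans ?_ hprod
    have haeq : a ^ s = (1 + ε) ^ (s / L) := by
      rw [hadef, ← Real.rpow_mul (by linarith : (0:ℝ) ≤ 1 + ε)]
      congr 1; field_simp
    have hbeq : b ^ s = (d : ℝ) ^ ((2 / 3) * s / U) := by
      rw [hbdef, ← Real.rpow_mul hd0.le]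
      congr 1; field_simp
    rw [← haeq, ← hbeq]
    rcases le_total a b with hab | hab
    · rw [hcdef, min_eq_left hab]
      exact min_le_left _ _
    · rw [hcdef, min_eq_right hab]
      exact min_le_right _ _
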